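/- For any positive integer m, the chromatic number of K[C5](m,m,m,m,m) equals ceil(5m/2). -/

import Mathlib

open SimpleGraph Finset

/-- `G` contains an induced copy of `H`. -/
def HasInducedCopy {V W : Type*} (G : SimpleGraph V) (H : SimpleGraph W) : Prop :=
  ∃ f : W ↪ V, ∀ a b, G.Adj (f a) (f b) ↔ H.Adj a b

/-- The cycle on `ZMod n` (for `n ≥ 3`). -/
def cyc (n : ℕ) : SimpleGraph (ZMod n) where
  Adj i j := i ≠ j ∧ (i = j + 1 ∨ j = i + 1)
  symm := ⟨fun i j h => ⟨h.1.symm, h.2.symm⟩⟩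
  loopless := ⟨fun i h => h.1 rfl⟩

/-- Kite: diamond (K4 minus an edge) plus a pendant vertex adjacent to a degree-3 vertex. -/
def kite : SimpleGraph (Fin 5) :=
  SimpleGraph.fromEdgeSet {s(0,1), s(0,2), s(1,2), s(1,3), s(2,3), s(1,4)}

/-- Bull: triangle with two pendant edges at distinct vertices. -/
def bull : SimpleGraph (Fin 5) :=
  SimpleGraph.fromEdgeSet {s(0,1), s(0,2), s(1,2), s(0,3), s(1,4)}

/-- Independent expansion of the cycle `C_n`. -/
def indExp (n : ℕ) (m : ZMod n → ℕ) : SimpleGraph (Σ i : ZMod n, Fin (m i)) where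
  Adj x y := x.1 ≠ y.1 ∧ (x.1 = y.1 + 1 ∨ y.1 = x.1 + 1)
  symm := ⟨fun x y h => ⟨h.1.symm, h.2.symm⟩⟩
  loopless := ⟨fun x h => h.1 rfl⟩

/-- Complete expansion of the cycle `C_n`. -/
def compExp (n : ℕ) (m : ZMod n → ℕ) : SimpleGraph (Σ i : ZMod n, Fin (m i)) where
  Adj x y := (x.1 = y.1 ∧ x ≠ y) ∨ (x.1 ≠ y.1 ∧ (x.1 = y.1 + 1 ∨ y.1 = x.1 + 1))
  symm := by
    refine ⟨?_⟩
    rintro x y (⟨h, hne⟩ | ⟨h, h2⟩)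
    · exact Or.inl ⟨h.symm, hne.symm⟩
    · exact Or.inr ⟨h.symm, h2.symm⟩
  loopless := ⟨by rintro x (⟨_, hne⟩ | ⟨h, _⟩); exacts [hne rfl, h rfl]⟩

/-- Distance from a vertex to a set of vertices. -/
noncomputable def distToSet {V : Type*} (G : SimpleGraph V) (S : Set V) (x : V) : ℕ :=
  sInf ((fun y => G.dist x y) '' S)

lemma same_clique_aux (m N j j' c : ℕ) (hN : m < N) (hj : j < m) (hj' : j' < m)
    (hjj : j ≠ j') (heq : (c + j) % N = (c + j') % N) : False := by
  rcases Nat.lt_or_ge j j' with h | h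
  · have hd : N ∣ (c + j') - (c + j) := (Nat.modEq_iff_dvd' (by omega)).mp heq
    have := Nat.le_of_dvd (by omega) hd
    omega
  · have hd : N ∣ (c + j) - (c + j') := (Nat.modEq_iff_dvd' (by omega)).mp heq.symm
    have := Nat.le_of_dvd (by omega) hd
    omega

lemma adj_clique_aux (m N a b j j' : ℕ) (hm : 0 < m) (hN : N = (5 * m + 1) / 2)
    (ha : a < 5) (hb : b < 5) (hj : j < m) (hj' : j' < m)
    (hab : a = (b + 1) % 5)
    (heq : (a * m + j) % N = (b * m + j') % N) : False := by
  interval_cases b <;> simp at hab <;> subst hab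
  · have hd : N ∣ (1 * m + j) - (0 * m + j') :=
      (Nat.modEq_iff_dvd' (by omega)).mp heq.symm
    have := Nat.le_of_dvd (by omega) hd
    omega
  · have hd : N ∣ (2 * m + j) - (1 * m + j') :=
      (Nat.modEq_iff_dvd' (by omega)).mp heq.symm
    have := Nat.le_of_dvd (by omega) hd
    omega
  · have hd : N ∣ (3 * m + j) - (2 * m + j') :=
      (Nat.modEq_iff_dvd' (by omega)).mp heq.symm
    have := Nat.le_of_dvd (by omega) hd
    omega
  · have hd : N ∣ (4 * m + j) - (3 * m + j') :=
      (Nat.modEq_iff_dvd' (by omega)).mp heq.symm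
    have := Nat.le_of_dvd (by omega) hd
    omega
  · have hd : N ∣ (4 * m + j') - (0 * m + j) :=
      (Nat.modEq_iff_dvd' (by omega)).mp heq
    obtain ⟨k, hk⟩ := hd
    match k with
    | 0 => omega
    | 1 => omega
    | (k + 2) =>
      have h2 : N * 2 ≤ N * (k + 2) := Nat.mul_le_mul_left N (by omega)
      rw [← hk] at h2
      omega

lemma zmod5_adj_val : ∀ a b : ZMod 5, (a = b + 1 ∨ b = a + 1) →
    (a.val = (b.val + 1) % 5 ∨ b.val = (a.val + 1) % 5) := by decide

lemma zmod5_indep : ∀ a b c : ZMod 5, a ≠ b → a ≠ c → b ≠ c →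
    ¬(a = b + 1 ∨ b = a + 1) → ¬(a = c + 1 ∨ c = a + 1) →
    ¬(b = c + 1 ∨ c = b + 1) → False := by decide

theorem stmt_13 (m : ℕ) (hm : 0 < m) :
    (compExp 5 fun _ => m).chromaticNumber = (((5 * m + 1) / 2 : ℕ) : ℕ∞) := by
  set N := (5 * m + 1) / 2 with hN
  have hNpos : 0 < N := by omega
  have hmN : m < N := by omega
  refine le_antisymm ?_ ?_
  · -- upper bound: explicit coloring
    have C : (compExp 5 fun _ => m).Coloring (Fin N) := by
      refine SimpleGraph.Coloring.mk
        (fun x => ⟨(x.1.val * m + x.2.val) % N, Nat.mod_lt _ hNpos⟩) ?_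
      rintro ⟨i, j⟩ ⟨i', j'⟩ (⟨h1, hne⟩ | ⟨hne, hc⟩) heq
    -- same clique
      · cases h1
        have hjj : j ≠ j' := fun h => hne (by rw [h])
        have heq' : (i.val * m + j.val) % N = (i.val * m + j'.val) % N :=
          congrArg Fin.val heq
        exact same_clique_aux m N j.val j'.val (i.val * m) hmN j.isLt j'.isLt
          (fun h => hjj (Fin.ext h)) heq'
      · have heq' : (i.val * m + j.val) % N = (i'.val * m + j'.val) % N :=
          congrArg Fin.val heq
        rcases zmod5_adj_val i i' hc with h | h
        · exact adj_clique_aux m N i.val i'.val j.val j'.val hm hN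
            (ZMod.val_lt i) (ZMod.val_lt i') j.isLt j'.isLt h heq'
        · exact adj_clique_aux m N i'.val i.val j'.val j.val hm hN
            (ZMod.val_lt i') (ZMod.val_lt i) j'.isLt j.isLt h heq'.symm
    have := C.colorable.chromaticNumber_le
    simpa using this
  · -- lower bound
    rw [SimpleGraph.chromaticNumber]
    refine le_iInf₂ fun n hn => ?_
    rw [Nat.cast_le]
    obtain ⟨C⟩ := hn
    have hfib : ∀ c : Fin n,
        ((univ : Finset (Σ _ : ZMod 5, Fin m)).filter fun v => C v = c).card ≤ 2 := by
      intro c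
      by_contra hlt
      push_neg at hlt
      obtain ⟨x, hx, y, hy, z, hz, hxy, hxz, hyz⟩ := Finset.two_lt_card.mp hlt
      simp only [mem_filter, mem_univ, true_and] at hx hy hz
      have nadj : ∀ u v : (Σ _ : ZMod 5, Fin m), C u = c → C v = c → u ≠ v →
          u.1 ≠ v.1 ∧ ¬(u.1 = v.1 + 1 ∨ v.1 = u.1 + 1) := by
        intro u v hu hv huv
        have h : ¬ (compExp 5 fun _ => m).Adj u v := by
          intro h
          exact C.valid h (hu.trans hv.symm)
        have h' : ¬((u.1 = v.1 ∧ u ≠ v) ∨ (u.1 ≠ v.1 ∧ (u.1 = v.1 + 1 ∨ v.1 = u.1 + 1))) := h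
        push_neg at h'
        obtain ⟨h1, h2⟩ := h'
        have h3 : u.1 ≠ v.1 := fun he => huv (by
          have := h1 he
          exact this)
        exact ⟨h3, fun h => h.elim (h2 h3).1 (h2 h3).2⟩
      obtain ⟨hxy1, hxy2⟩ := nadj x y hx hy hxy
      obtain ⟨hxz1, hxz2⟩ := nadj x z hx hz hxz
      obtain ⟨hyz1, hyz2⟩ := nadj y z hy hz hyz
      exact zmod5_indep x.1 y.1 z.1 hxy1 hxz1 hyz1 hxy2 hxz2 hyz2
    have hcard : (univ : Finset (Σ _ : ZMod 5, Fin m)).card = 5 * m := by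
      simp [Finset.card_univ, Fintype.card_sigma]
    have hsum : (univ : Finset (Σ _ : ZMod 5, Fin m)).card =
        ∑ c : Fin n, ((univ : Finset (Σ _ : ZMod 5, Fin m)).filter fun v => C v = c).card :=
      Finset.card_eq_sum_card_fiberwise (fun v _ => mem_univ (C v))
    have hle : ∑ c : Fin n, ((univ : Finset (Σ _ : ZMod 5, Fin m)).filter
        fun v => C v = c).card ≤ ∑ _c : Fin n, 2 :=
      Finset.sum_le_sum fun c _ => hfib c
    simp only [Finset.sum_const, card_univ, Fintype.card_fin, smul_eq_mul] at hle
    omega
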